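/- Let matrices B_i, B_{i+1}, …, B_{k+1} and J_i, …, J_k in ℝ^{n×n} and vectors s_i, …, s_k in ℝⁿ satisfy B_{t+1} = AAA(B_t, J_t, s_t) for i ≤ t ≤ k. Then for any matrix A ∈ ℝ^{n×n}: (a) ‖B_{t+1} − A‖_F ≤ ‖B_t − A‖_F + ‖J_t − A‖_F for each t; and (b) ‖(B_{k+1} − A) s_i‖ ≤ Σ_{t=i}^{k} ‖(J_t − A) s_i‖ ≤ (Σ_{t=i}^{k} ‖J_t − A‖_F) · ‖s_i‖. -/

import Mathlib

open Matrix MeasureTheory ProbabilityTheory Finset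

/-- Euclidean norm of a vector in ℝⁿ. -/
noncomputable def enorm' {n : ℕ} (v : Fin n → ℝ) : ℝ := Real.sqrt (∑ i, (v i) ^ 2)

/-- Frobenius norm of a real n×n matrix. -/
noncomputable def frob {n : ℕ} (A : Matrix (Fin n) (Fin n) ℝ) : ℝ :=
  Real.sqrt (∑ i, ∑ j, (A i j) ^ 2)

/-- Spectral (ℓ₂ operator) norm of a real n×n matrix. -/
noncomputable def opNorm' {n : ℕ} (A : Matrix (Fin n) (Fin n) ℝ) : ℝ :=
  ‖Matrix.toEuclideanCLM (𝕜 := ℝ) A‖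

/-- The AAA update: AAA(B,J,s) = B + ((J−B) s sᵀ (J−B)ᵀ / (sᵀ(J−B)ᵀ(J−B)s)) (J−B)
if (J−B)s ≠ 0, and B otherwise. -/
noncomputable def AAAupd {n : ℕ} (B J : Matrix (Fin n) (Fin n) ℝ) (s : Fin n → ℝ) :
    Matrix (Fin n) (Fin n) ℝ :=
  if (J - B).mulVec s = 0 then B
  else B + (((J - B).mulVec s) ⬝ᵥ ((J - B).mulVec s))⁻¹ •
      (Matrix.vecMulVec ((J - B).mulVec s) ((J - B).mulVec s) * (J - B))

/-- `s` is a standard basis vector maximizing ‖R e_i‖ over the standard basis. -/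
noncomputable def IsGreedy {n : ℕ} (R : Matrix (Fin n) (Fin n) ℝ) (s : Fin n → ℝ) : Prop :=
  ∃ i : Fin n, s = Pi.single i 1 ∧
    ∀ j : Fin n, enorm' (R.mulVec (Pi.single j 1)) ≤ enorm' (R.mulVec (Pi.single i 1))

/-- `P` is the orthogonal-projection matrix onto the subspace `V` of ℝⁿ
(symmetric, idempotent, range `V`, identity on `V`). -/
def IsOrthProj {n : ℕ} (P : Matrix (Fin n) (Fin n) ℝ) (V : Submodule ℝ (Fin n → ℝ)) : Prop :=
  P.IsSymm ∧ P * P = P ∧ (∀ v, P.mulVec v ∈ V) ∧ (∀ v ∈ V, P.mulVec v = v)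

/-- Standard Gaussian measure on ℝⁿ: the n-fold product of N(0,1). -/
noncomputable def stdGaussianPi (n : ℕ) : MeasureTheory.Measure (Fin n → ℝ) :=
  MeasureTheory.Measure.pi fun _ => ProbabilityTheory.gaussianReal 0 1

/-! ### Auxiliary lemmas -/

lemma enorm'_nonneg {n : ℕ} (v : Fin n → ℝ) : 0 ≤ enorm' v := Real.sqrt_nonneg _

lemma frob_nonneg {n : ℕ} (A : Matrix (Fin n) (Fin n) ℝ) : 0 ≤ frob A := Real.sqrt_nonneg _

lemma enorm'_eq_norm {n : ℕ} (v : Fin n → ℝ) :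
    enorm' v = ‖(WithLp.equiv 2 (Fin n → ℝ)).symm v‖ := by
  rw [EuclideanSpace.norm_eq, enorm']
  congr 1; apply Finset.sum_congr rfl; intro x _; simp [sq_abs]

lemma inner_eq_dot {n : ℕ} (u v : Fin n → ℝ) :
    (inner ℝ ((WithLp.equiv 2 (Fin n → ℝ)).symm u) ((WithLp.equiv 2 (Fin n → ℝ)).symm v) : ℝ)
      = u ⬝ᵥ v := by
  simp [EuclideanSpace.inner_eq_star_dotProduct, dotProduct, mul_comm]

lemma abs_dot_le {n : ℕ} (u v : Fin n → ℝ) : |u ⬝ᵥ v| ≤ enorm' u * enorm' v := by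
  rw [enorm'_eq_norm, enorm'_eq_norm, ← inner_eq_dot]
  exact abs_real_inner_le_norm _ _

lemma enorm'_add_le {n : ℕ} (u v : Fin n → ℝ) : enorm' (u + v) ≤ enorm' u + enorm' v := by
  rw [enorm'_eq_norm, enorm'_eq_norm, enorm'_eq_norm]
  exact norm_add_le _ _

lemma enorm'_sq {n : ℕ} (v : Fin n → ℝ) : enorm' v ^ 2 = v ⬝ᵥ v := by
  rw [enorm', Real.sq_sqrt (by positivity)]; simp [dotProduct, sq]

lemma enorm'_eq_sqrt_dot {n : ℕ} (v : Fin n → ℝ) : enorm' v = Real.sqrt (v ⬝ᵥ v) := by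
  rw [enorm']; congr 1; simp [dotProduct, sq]

lemma enorm'_smul {n : ℕ} (c : ℝ) (v : Fin n → ℝ) : enorm' (c • v) = |c| * enorm' v := by
  rw [enorm'_eq_norm, enorm'_eq_norm]
  have : (WithLp.equiv 2 (Fin n → ℝ)).symm (c • v)
      = c • (WithLp.equiv 2 (Fin n → ℝ)).symm v := rfl
  rw [this, norm_smul]; simp

lemma enorm'_mono {n : ℕ} {v w : Fin n → ℝ} (h : ∀ j, |v j| ≤ w j) :
    enorm' v ≤ enorm' w := by
  rw [enorm', enorm']
  apply Real.sqrt_le_sqrt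
  apply Finset.sum_le_sum
  intro j _
  rw [← sq_abs (v j)]
  exact pow_le_pow_left₀ (abs_nonneg _) (h j) 2

lemma enorm'_mulVec_le {n : ℕ} (M : Matrix (Fin n) (Fin n) ℝ) (v : Fin n → ℝ) :
    enorm' (M.mulVec v) ≤ frob M * enorm' v := by
  have h1 : ∀ i, (M.mulVec v i) ^ 2 ≤ (∑ j, (M i j) ^ 2) * (enorm' v ^ 2) := fun i =>
    calc (M.mulVec v i) ^ 2 ≤ (enorm' (M i) * enorm' v) ^ 2 := by
          rw [← sq_abs]
          exact pow_le_pow_left₀ (abs_nonneg _) (abs_dot_le (M i) v) 2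
      _ = (∑ j, (M i j) ^ 2) * (enorm' v ^ 2) := by
          rw [mul_pow, enorm', Real.sq_sqrt (by positivity)]
  calc enorm' (M.mulVec v) ≤ Real.sqrt ((∑ i, ∑ j, (M i j) ^ 2) * enorm' v ^ 2) := by
        rw [enorm']
        apply Real.sqrt_le_sqrt
        rw [Finset.sum_mul]
        exact Finset.sum_le_sum fun i _ => h1 i
    _ = frob M * enorm' v := by
        rw [Real.sqrt_mul (by positivity), Real.sqrt_sq (enorm'_nonneg v), frob]

lemma vecMulVec_mulVec' {n : ℕ} (u w m : Fin n → ℝ) :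
    (Matrix.vecMulVec u w).mulVec m = (w ⬝ᵥ m) • u := by
  funext i
  simp [Matrix.vecMulVec_apply, Matrix.mulVec, dotProduct, Finset.sum_mul, Finset.mul_sum,
    mul_comm, mul_assoc, mul_left_comm]

lemma dot_self_pos {n : ℕ} {u : Fin n → ℝ} (h : u ≠ 0) : 0 < u ⬝ᵥ u := by
  have hnn : 0 ≤ u ⬝ᵥ u := by simp only [dotProduct, ← sq]; positivity
  rcases hnn.lt_or_eq with h1 | h1
  · exact h1
  · exfalso; apply h
    funext i
    have hz : ∑ j, u j ^ 2 = 0 := by simpa [dotProduct, sq] using h1.symm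
    have := (Finset.sum_eq_zero_iff_of_nonneg (fun j _ => sq_nonneg (u j))).mp hz i (by simp)
    simpa using pow_eq_zero_iff (n := 2) (by norm_num) |>.mp this

lemma proj_bound1 {n : ℕ} (u w : Fin n → ℝ) (huu : 0 < u ⬝ᵥ u) :
    enorm' (w - ((u ⬝ᵥ u)⁻¹ * (u ⬝ᵥ w)) • u) ≤ enorm' w := by
  rw [enorm'_eq_sqrt_dot, enorm'_eq_sqrt_dot]
  apply Real.sqrt_le_sqrt
  have hexp : (w - ((u ⬝ᵥ u)⁻¹ * (u ⬝ᵥ w)) • u) ⬝ᵥ (w - ((u ⬝ᵥ u)⁻¹ * (u ⬝ᵥ w)) • u)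
      = w ⬝ᵥ w - (u ⬝ᵥ u)⁻¹ * (u ⬝ᵥ w) ^ 2 := by
    simp only [sub_dotProduct, dotProduct_sub, smul_dotProduct, dotProduct_smul,
      smul_eq_mul, dotProduct_comm u w]
    field_simp
    ring
  rw [hexp]
  have : 0 ≤ (u ⬝ᵥ u)⁻¹ * (u ⬝ᵥ w) ^ 2 := by positivity
  linarith

lemma proj_bound2 {n : ℕ} (u z : Fin n → ℝ) (huu : 0 < u ⬝ᵥ u) :
    enorm' (((u ⬝ᵥ u)⁻¹ * (u ⬝ᵥ z)) • u) ≤ enorm' z := by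
  rw [enorm'_smul, abs_mul]
  have h2 : enorm' u ^ 2 = u ⬝ᵥ u := enorm'_sq u
  have hcabs : |(u ⬝ᵥ u)⁻¹| = (u ⬝ᵥ u)⁻¹ := abs_of_pos (inv_pos.mpr huu)
  calc |(u ⬝ᵥ u)⁻¹| * |u ⬝ᵥ z| * enorm' u
      ≤ (u ⬝ᵥ u)⁻¹ * (enorm' u * enorm' z) * enorm' u := by
        rw [hcabs]
        exact mul_le_mul_of_nonneg_right
          (mul_le_mul_of_nonneg_left (abs_dot_le u z) (inv_pos.mpr huu).le) (enorm'_nonneg u)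
    _ = (u ⬝ᵥ u)⁻¹ * (enorm' u ^ 2) * enorm' z := by ring
    _ = enorm' z := by rw [h2, inv_mul_cancel₀ huu.ne']; ring

lemma AAA_mulVec {n : ℕ} (B J : Matrix (Fin n) (Fin n) ℝ) (s v : Fin n → ℝ)
    (h : (J - B).mulVec s ≠ 0) :
    (AAAupd B J s).mulVec v = B.mulVec v +
      (((((J - B).mulVec s) ⬝ᵥ ((J - B).mulVec s))⁻¹ *
        (((J - B).mulVec s) ⬝ᵥ ((J - B).mulVec v)))) • ((J - B).mulVec s) := by
  rw [AAAupd, if_neg h, Matrix.add_mulVec, Matrix.smul_mulVec, ← Matrix.mulVec_mulVec,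
    vecMulVec_mulVec', smul_smul]

lemma AAA_key {n : ℕ} (B J A : Matrix (Fin n) (Fin n) ℝ) (s : Fin n → ℝ) :
    (AAAupd B J s - A).mulVec s = (J - A).mulVec s := by
  by_cases h : (J - B).mulVec s = 0
  · have hJ : J.mulVec s = B.mulVec s := by rwa [Matrix.sub_mulVec, sub_eq_zero] at h
    rw [AAAupd, if_pos h, Matrix.sub_mulVec, Matrix.sub_mulVec, hJ]
  · have huu : ((J - B).mulVec s) ⬝ᵥ ((J - B).mulVec s) ≠ 0 := (dot_self_pos h).ne'
    rw [Matrix.sub_mulVec, AAA_mulVec B J s s h, inv_mul_cancel₀ huu, one_smul,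
      Matrix.sub_mulVec, Matrix.sub_mulVec]
    abel

lemma AAA_step {n : ℕ} (B J A : Matrix (Fin n) (Fin n) ℝ) (s v : Fin n → ℝ) :
    enorm' ((AAAupd B J s - A).mulVec v) ≤
      enorm' ((B - A).mulVec v) + enorm' ((J - A).mulVec v) := by
  by_cases h : (J - B).mulVec s = 0
  · rw [AAAupd, if_pos h]
    exact le_add_of_le_of_nonneg le_rfl (enorm'_nonneg _)
  · have huu : 0 < ((J - B).mulVec s) ⬝ᵥ ((J - B).mulVec s) := dot_self_pos h
    rw [Matrix.sub_mulVec, AAA_mulVec B J s v h]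
    have hexp : B.mulVec v +
        ((((J - B).mulVec s) ⬝ᵥ ((J - B).mulVec s))⁻¹ *
          (((J - B).mulVec s) ⬝ᵥ ((J - B).mulVec v))) • ((J - B).mulVec s) - A.mulVec v
        = ((B - A).mulVec v -
            ((((J - B).mulVec s) ⬝ᵥ ((J - B).mulVec s))⁻¹ *
              (((J - B).mulVec s) ⬝ᵥ ((B - A).mulVec v))) • ((J - B).mulVec s)) +
          ((((J - B).mulVec s) ⬝ᵥ ((J - B).mulVec s))⁻¹ *
            (((J - B).mulVec s) ⬝ᵥ ((J - A).mulVec v))) • ((J - B).mulVec s) := by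
      have hm : (J - B).mulVec v = (J - A).mulVec v - (B - A).mulVec v := by
        rw [Matrix.sub_mulVec, Matrix.sub_mulVec, Matrix.sub_mulVec]; abel
      rw [hm, dotProduct_sub, mul_sub, sub_smul]
      simp only [Matrix.sub_mulVec]
      abel
    rw [hexp]
    exact le_trans (enorm'_add_le _ _)
      (add_le_add (proj_bound1 _ _ huu) (proj_bound2 _ _ huu))

lemma frob_eq_enorm'_cols {n : ℕ} (M : Matrix (Fin n) (Fin n) ℝ) :
    frob M = enorm' (fun j => enorm' (M.mulVec (Pi.single j 1))) := by
  rw [frob, enorm', Finset.sum_comm]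
  congr 1
  apply Finset.sum_congr rfl
  intro j _
  rw [enorm', Real.sq_sqrt (by positivity)]
  apply Finset.sum_congr rfl
  intro x _
  simp

lemma AAA_frob {n : ℕ} (B J A : Matrix (Fin n) (Fin n) ℝ) (s : Fin n → ℝ) :
    frob (AAAupd B J s - A) ≤ frob (B - A) + frob (J - A) := by
  rw [frob_eq_enorm'_cols, frob_eq_enorm'_cols, frob_eq_enorm'_cols]
  calc enorm' (fun j => enorm' ((AAAupd B J s - A).mulVec (Pi.single j 1)))
      ≤ enorm' ((fun j => enorm' ((B - A).mulVec (Pi.single j 1))) +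
          (fun j => enorm' ((J - A).mulVec (Pi.single j 1)))) := by
        apply enorm'_mono
        intro j
        rw [abs_of_nonneg (enorm'_nonneg _)]
        exact AAA_step B J A s (Pi.single j 1)
    _ ≤ _ := enorm'_add_le _ _

theorem stmt_17 {n : ℕ} (B Jm : ℕ → Matrix (Fin n) (Fin n) ℝ) (s : ℕ → Fin n → ℝ)
    (i k : ℕ) (hik : i ≤ k)
    (hupd : ∀ t, i ≤ t → t ≤ k → B (t + 1) = AAAupd (B t) (Jm t) (s t))
    (A : Matrix (Fin n) (Fin n) ℝ) :
    (∀ t, i ≤ t → t ≤ k → frob (B (t + 1) - A) ≤ frob (B t - A) + frob (Jm t - A)) ∧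
    enorm' ((B (k + 1) - A).mulVec (s i)) ≤
      ∑ t ∈ Finset.Icc i k, enorm' ((Jm t - A).mulVec (s i)) ∧
    ∑ t ∈ Finset.Icc i k, enorm' ((Jm t - A).mulVec (s i)) ≤
      (∑ t ∈ Finset.Icc i k, frob (Jm t - A)) * enorm' (s i) := by
  refine ⟨?_, ?_, ?_⟩
  · intro t ht1 ht2
    rw [hupd t ht1 ht2]
    exact AAA_frob _ _ _ _
  · have key : ∀ m, i ≤ m → m ≤ k →
        enorm' ((B (m + 1) - A).mulVec (s i)) ≤
          ∑ t ∈ Finset.Icc i m, enorm' ((Jm t - A).mulVec (s i)) := by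
      intro m hm
      induction m, hm using Nat.le_induction with
      | base =>
        intro _
        rw [hupd i le_rfl hik, Finset.Icc_self, Finset.sum_singleton, AAA_key]
      | succ m hm ih =>
        intro hmk
        have h1 : m ≤ k := le_trans (Nat.le_succ m) hmk
        rw [hupd (m + 1) (hm.trans (Nat.le_succ m)) hmk]
        calc enorm' ((AAAupd (B (m + 1)) (Jm (m + 1)) (s (m + 1)) - A).mulVec (s i))
            ≤ enorm' ((B (m + 1) - A).mulVec (s i)) +
              enorm' ((Jm (m + 1) - A).mulVec (s i)) := AAA_step _ _ _ _ _
          _ ≤ (∑ t ∈ Finset.Icc i m, enorm' ((Jm t - A).mulVec (s i))) +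
              enorm' ((Jm (m + 1) - A).mulVec (s i)) :=
            add_le_add_left (ih h1) _
          _ = ∑ t ∈ Finset.Icc i (m + 1), enorm' ((Jm t - A).mulVec (s i)) :=
            (Finset.sum_Icc_succ_top (hm.trans (Nat.le_succ m)) _).symm
    exact key k hik le_rfl
  · rw [Finset.sum_mul]
    exact Finset.sum_le_sum fun t _ => enorm'_mulVec_le _ _
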